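/- Let r ≤ n and let Sh(r, n−r) ⊂ 𝔖ₙ denote the set of (r, n−r)-shuffles. For any symmetric polynomial f ∈ ℚ[λ₁,…,λₙ]^{𝔖ᵣ×𝔖_{n−r}} (symmetric separately in λ₁,…,λᵣ and in λ_{r+1},…,λₙ), the rational function ∑_{σ ∈ Sh(r,n−r)} σ( f / ∏_{1≤j≤r, r+1≤i≤n}(λᵢ − λⱼ) ) is a polynomial, and it is symmetric under the full group 𝔖ₙ. -/

import Mathlib

open MvPolynomial Equiv

noncomputable section

/-- The polynomial ring `ℚ[λ₁,…,λₙ]`. -/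
abbrev PolyS (n : ℕ) := MvPolynomial (Fin n) ℚ

/-- Its field of fractions (rational functions). -/
abbrev FracK (n : ℕ) := FractionRing (PolyS n)

/-- The action of a permutation of the variables on the field of rational functions. -/
def permAct (n : ℕ) (σ : Perm (Fin n)) : FracK n ≃+* FracK n :=
  IsFractionRing.ringEquivOfRingEquiv (renameEquiv ℚ σ).toRingEquiv

/-- The set of `(r, n-r)`-shuffles in `𝔖ₙ`: permutations strictly increasing on the first
block `{0,…,r-1}` and on the second block `{r,…,n-1}`. -/
def shuffles (n r : ℕ) : Finset (Perm (Fin n)) :=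
  Finset.univ.filter fun σ =>
    ∀ i j : Fin n, i < j → ((j : ℕ) < r ∨ r ≤ (i : ℕ)) → σ i < σ j

/-- The Euler factor `∏_{1≤j≤r, r+1≤i≤n} (λᵢ - λⱼ)`. -/
def euFactor (n r : ℕ) : PolyS n :=
  ∏ p ∈ Finset.univ.filter (fun p : Fin n × Fin n => (p.1 : ℕ) < r ∧ r ≤ (p.2 : ℕ)),
    (X p.2 - X p.1)

namespace Stmt4Aux

variable {n r : ℕ}

/-- algebraMap shorthand -/
abbrev aM (n : ℕ) : PolyS n →+* FracK n := algebraMap (PolyS n) (FracK n)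

lemma aM_injective (n : ℕ) : Function.Injective (aM n) :=
  IsFractionRing.injective (PolyS n) (FracK n)

lemma permAct_aM (σ : Perm (Fin n)) (p : PolyS n) :
    permAct n σ (aM n p) = aM n (rename σ p) :=
  IsFractionRing.ringEquivOfRingEquiv_algebraMap _ p

lemma permAct_permAct (σ τ : Perm (Fin n)) (x : FracK n) :
    permAct n σ (permAct n τ x) = permAct n (σ * τ) x := by
  have h : ((permAct n σ : FracK n →+* FracK n).comp (permAct n τ : FracK n →+* FracK n))
      = (permAct n (σ * τ) : FracK n →+* FracK n) := by
    apply IsLocalization.ringHom_ext (nonZeroDivisors (PolyS n))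
    refine RingHom.ext fun p => ?_
    simp only [RingHom.comp_apply, RingHom.coe_coe]
    rw [show ((algebraMap (PolyS n) (FracK n)) p) = aM n p from rfl,
      permAct_aM, permAct_aM, permAct_aM, rename_rename]
    rfl
  exact RingHom.congr_fun h x


/-! ### Block-preserving permutations -/

def Hcond (n r : ℕ) (σ : Perm (Fin n)) : Prop := ∀ i : Fin n, (i : ℕ) < r → ((σ i : ℕ) < r)

def blk1 (n r : ℕ) : Finset (Fin n) := Finset.univ.filter fun i => (i : ℕ) < r

lemma mem_blk1 {i : Fin n} : i ∈ blk1 n r ↔ (i : ℕ) < r := by simp [blk1]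

lemma blk1_card (hr : r ≤ n) : (blk1 n r).card = r := by
  have h : blk1 n r = Finset.map (Fin.castLEEmb hr) Finset.univ := by
    ext i
    simp only [mem_blk1, Finset.mem_map, Finset.mem_univ, true_and, Fin.castLEEmb]
    constructor
    · intro h; exact ⟨⟨(i : ℕ), h⟩, by ext; rfl⟩
    · rintro ⟨a, rfl⟩; simpa using a.2
  rw [h, Finset.card_map, Finset.card_univ, Fintype.card_fin]

lemma Hcond.image_blk1 {σ : Perm (Fin n)} (h : Hcond n r σ) :
    (blk1 n r).image σ = blk1 n r := by
  apply Finset.eq_of_subset_of_card_le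
  · intro j hj
    obtain ⟨i, hi, rfl⟩ := Finset.mem_image.mp hj
    exact mem_blk1.mpr (h i (mem_blk1.mp hi))
  · rw [Finset.card_image_of_injective _ σ.injective]

lemma Hcond.ge {σ : Perm (Fin n)} (h : Hcond n r σ) :
    ∀ i : Fin n, r ≤ (i : ℕ) → r ≤ ((σ i : ℕ)) := by
  intro i hi
  by_contra hc
  push_neg at hc
  have : σ i ∈ (blk1 n r).image σ := by rw [h.image_blk1]; exact mem_blk1.mpr hc
  obtain ⟨j, hj, hji⟩ := Finset.mem_image.mp this
  have : j = i := σ.injective hji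
  subst this
  exact absurd (mem_blk1.mp hj) (by omega)

lemma Hcond.inv {σ : Perm (Fin n)} (h : Hcond n r σ) : Hcond n r σ⁻¹ := by
  intro i hi
  have : i ∈ (blk1 n r).image σ := by rw [h.image_blk1]; exact mem_blk1.mpr hi
  obtain ⟨j, hj, hji⟩ := Finset.mem_image.mp this
  have : σ⁻¹ i = j := by rw [← hji]; simp
  rw [this]; exact mem_blk1.mp hj

/-! ### Invariance of the Euler factor -/

def EPairs (n r : ℕ) : Finset (Fin n × Fin n) :=
  Finset.univ.filter (fun p : Fin n × Fin n => (p.1 : ℕ) < r ∧ r ≤ (p.2 : ℕ))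

lemma mem_EPairs {p : Fin n × Fin n} : p ∈ EPairs n r ↔ (p.1 : ℕ) < r ∧ r ≤ (p.2 : ℕ) := by
  simp [EPairs]

lemma euFactor_eq : euFactor n r = ∏ p ∈ EPairs n r, (X p.2 - X p.1) := rfl

lemma rename_euFactor {h : Perm (Fin n)} (hh : Hcond n r h) :
    rename (⇑h) (euFactor n r) = euFactor n r := by
  rw [euFactor_eq, map_prod]
  simp only [map_sub, rename_X]
  refine Finset.prod_nbij' (fun p => (h p.1, h p.2)) (fun p => (h⁻¹ p.1, h⁻¹ p.2))
    ?_ ?_ ?_ ?_ ?_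
  · intro p hp
    obtain ⟨h1, h2⟩ := mem_EPairs.mp hp
    exact mem_EPairs.mpr ⟨hh p.1 h1, hh.ge p.2 h2⟩
  · intro p hp
    obtain ⟨h1, h2⟩ := mem_EPairs.mp hp
    exact mem_EPairs.mpr ⟨hh.inv p.1 h1, hh.inv.ge p.2 h2⟩
  · intro p _; simp
  · intro p _; simp
  · intro p _; rfl


/-! ### The shuffle associated with an r-subset -/

lemma compl_card {T : Finset (Fin n)} (hT : T.card = r) : Tᶜ.card = n - r := by
  rw [Finset.card_compl, hT, Fintype.card_fin]

def shuffleFun (T : Finset (Fin n)) (hT : T.card = r) (hr : r ≤ n) : Fin n → Fin n :=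
  fun i => if h : (i : ℕ) < r then T.orderEmbOfFin hT ⟨i, h⟩
    else Tᶜ.orderEmbOfFin (compl_card hT) ⟨(i : ℕ) - r, by
      have := i.2; omega⟩

lemma shuffleFun_injective (hr : r ≤ n) (T : Finset (Fin n)) (hT : T.card = r) :
    Function.Injective (shuffleFun T hT hr) := by
  intro i j hij
  unfold shuffleFun at hij
  by_cases hi : (i : ℕ) < r <;> by_cases hj : (j : ℕ) < r
  · rw [dif_pos hi, dif_pos hj] at hij
    have h1 := (T.orderEmbOfFin hT).injective hij
    exact Fin.ext (Fin.mk_eq_mk.mp h1)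
  · rw [dif_pos hi, dif_neg hj] at hij
    have h1 : T.orderEmbOfFin hT ⟨(i : ℕ), hi⟩ ∈ T := T.orderEmbOfFin_mem hT _
    have h2 := Finset.orderEmbOfFin_mem Tᶜ (compl_card hT) ⟨(j : ℕ) - r, by have := j.2; omega⟩
    rw [← hij] at h2
    exact absurd h1 (Finset.mem_compl.mp h2)
  · rw [dif_neg hi, dif_pos hj] at hij
    have h1 : T.orderEmbOfFin hT ⟨(j : ℕ), hj⟩ ∈ T := T.orderEmbOfFin_mem hT _
    have h2 := Finset.orderEmbOfFin_mem Tᶜ (compl_card hT) ⟨(i : ℕ) - r, by have := i.2; omega⟩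
    rw [hij] at h2
    exact absurd h1 (Finset.mem_compl.mp h2)
  · rw [dif_neg hi, dif_neg hj] at hij
    have h1 := (Tᶜ.orderEmbOfFin (compl_card hT)).injective hij
    have h2 : (i : ℕ) - r = (j : ℕ) - r := Fin.mk_eq_mk.mp h1
    exact Fin.ext (by omega)

def shuffleOf (hr : r ≤ n) (T : Finset (Fin n)) (hT : T.card = r) : Perm (Fin n) :=
  Equiv.ofBijective (shuffleFun T hT hr)
    (Finite.injective_iff_bijective.mp (shuffleFun_injective hr T hT))

lemma shuffleOf_apply (hr : r ≤ n) (T : Finset (Fin n)) (hT : T.card = r) (i : Fin n) :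
    shuffleOf hr T hT i = shuffleFun T hT hr i := rfl

lemma shuffleOf_mem (hr : r ≤ n) (T : Finset (Fin n)) (hT : T.card = r) :
    shuffleOf hr T hT ∈ shuffles n r := by
  rw [shuffles, Finset.mem_filter]
  refine ⟨Finset.mem_univ _, fun i j hij hcase => ?_⟩
  rw [shuffleOf_apply, shuffleOf_apply]
  unfold shuffleFun
  rcases hcase with hj | hi2
  · have hi : (i : ℕ) < r := lt_trans hij hj
    rw [dif_pos hi, dif_pos hj]
    exact (T.orderEmbOfFin hT).strictMono (by exact hij)
  · have hj : ¬ (j : ℕ) < r := by omega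
    have hi : ¬ (i : ℕ) < r := by omega
    rw [dif_neg hi, dif_neg hj]
    refine (Tᶜ.orderEmbOfFin (compl_card hT)).strictMono ?_
    have : (i : ℕ) < (j : ℕ) := hij
    exact Fin.mk_lt_mk.mpr (by omega)

lemma shuffleOf_image (hr : r ≤ n) (T : Finset (Fin n)) (hT : T.card = r) :
    (blk1 n r).image (shuffleOf hr T hT) = T := by
  apply Finset.eq_of_subset_of_card_le
  · intro j hj
    obtain ⟨i, hi, rfl⟩ := Finset.mem_image.mp hj
    have hi' := mem_blk1.mp hi
    rw [shuffleOf_apply]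
    unfold shuffleFun
    rw [dif_pos hi']
    exact T.orderEmbOfFin_mem hT _
  · rw [Finset.card_image_of_injective _ (shuffleOf hr T hT).injective, blk1_card hr, hT]

lemma shuffle_image_card (hr : r ≤ n) (g : Perm (Fin n)) : ((blk1 n r).image g).card = r := by
  rw [Finset.card_image_of_injective _ g.injective, blk1_card hr]

/-- Uniqueness: a shuffle is determined by the image of the first block. -/
lemma shuffle_eq_shuffleOf (hr : r ≤ n) {s : Perm (Fin n)} (hs : s ∈ shuffles n r)
    {T : Finset (Fin n)} (hT : T.card = r) (him : (blk1 n r).image s = T) :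
    s = shuffleOf hr T hT := by
  subst him
  rw [shuffles, Finset.mem_filter] at hs
  have hmono := hs.2
  -- first block
  have hf : (fun k : Fin r => s ⟨(k : ℕ), lt_of_lt_of_le k.2 hr⟩)
      = ⇑(((blk1 n r).image ⇑s).orderEmbOfFin hT) := by
    apply Finset.orderEmbOfFin_unique
    · intro x
      exact Finset.mem_image.mpr ⟨_, mem_blk1.mpr x.2, rfl⟩
    · intro a b hab
      exact hmono _ _ (Fin.mk_lt_mk.mpr hab) (Or.inl b.2)
  -- second block
  have hg : (fun k : Fin (n - r) => s ⟨r + (k : ℕ), by have := k.2; omega⟩)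
      = ⇑((((blk1 n r).image ⇑s)ᶜ).orderEmbOfFin (compl_card hT)) := by
    apply Finset.orderEmbOfFin_unique
    · intro x
      rw [Finset.mem_compl]
      intro hmem
      obtain ⟨j, hj, hji⟩ := Finset.mem_image.mp hmem
      have : j = ⟨r + (x : ℕ), by have := x.2; omega⟩ := s.injective hji
      have hj' := mem_blk1.mp hj
      rw [this] at hj'
      simp only at hj'
      omega
    · intro a b hab
      exact hmono _ _ (Fin.mk_lt_mk.mpr (by omega)) (Or.inr (by simp))
  apply Equiv.ext
  intro i
  rw [shuffleOf_apply]
  unfold shuffleFun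
  by_cases hi : (i : ℕ) < r
  · rw [dif_pos hi]
    have := congrFun hf ⟨(i : ℕ), hi⟩
    simpa using this
  · rw [dif_neg hi]
    have := congrFun hg ⟨(i : ℕ) - r, by have := i.2; omega⟩
    simp only at this
    rw [← this]
    congr 1
    ext
    simp only
    omega

/-! ### The shuffle representative of a coset -/

def shOf (hr : r ≤ n) (g : Perm (Fin n)) : Perm (Fin n) :=
  shuffleOf hr ((blk1 n r).image g) (shuffle_image_card hr g)

lemma shOf_mem (hr : r ≤ n) (g : Perm (Fin n)) : shOf hr g ∈ shuffles n r := shuffleOf_mem hr _ _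

lemma shOf_image (hr : r ≤ n) (g : Perm (Fin n)) : (blk1 n r).image (shOf hr g) = (blk1 n r).image g :=
  shuffleOf_image hr _ _

lemma shOf_hcond (hr : r ≤ n) (g : Perm (Fin n)) : Hcond n r ((shOf hr g)⁻¹ * g) := by
  intro i hi
  have : g i ∈ (blk1 n r).image (shOf hr g) := by
    rw [shOf_image hr]
    exact Finset.mem_image.mpr ⟨i, mem_blk1.mpr hi, rfl⟩
  obtain ⟨j, hj, hji⟩ := Finset.mem_image.mp this
  have : (shOf hr g)⁻¹ (g i) = j := by rw [← hji]; simp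
  rw [Perm.mul_apply, this]
  exact mem_blk1.mp hj

lemma shOf_mul_H (hr : r ≤ n) {g h : Perm (Fin n)} (hh : Hcond n r h) : shOf hr (g * h) = shOf hr g := by
  have him : (blk1 n r).image (g * h) = (blk1 n r).image g := by
    have : (blk1 n r).image (g * h) = ((blk1 n r).image h).image g := by
      rw [Finset.image_image]; rfl
    rw [this, hh.image_blk1]
  exact shuffle_eq_shuffleOf hr (shOf_mem hr (g * h)) (shuffle_image_card hr g)
    (by rw [shOf_image hr, him])

lemma shOf_shuffle (hr : r ≤ n) {s : Perm (Fin n)} (hs : s ∈ shuffles n r) : shOf hr s = s :=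
  (shuffle_eq_shuffleOf hr hs (shuffle_image_card hr s) rfl).symm


/-! ### Invariance of the shuffle sum -/

def xelt (n r : ℕ) (f : PolyS n) : FracK n := aM n f / aM n (euFactor n r)

lemma permAct_xelt_H (f : PolyS n) (hf : ∀ σ : Perm (Fin n), Hcond n r σ → rename ⇑σ f = f)
    {h : Perm (Fin n)} (hh : Hcond n r h) :
    permAct n h (xelt n r f) = xelt n r f := by
  rw [xelt, map_div₀]
  rw [show ((algebraMap (PolyS n) (FracK n)) f) = aM n f from rfl]
  rw [permAct_aM, permAct_aM, hf h hh, rename_euFactor hh]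

lemma sum_shuffles_invariant (hr : r ≤ n) (f : PolyS n)
    (hf : ∀ σ : Perm (Fin n), Hcond n r σ → rename ⇑σ f = f) (τ : Perm (Fin n)) :
    ∑ σ ∈ shuffles n r, permAct n (τ * σ) (xelt n r f)
      = ∑ σ ∈ shuffles n r, permAct n σ (xelt n r f) := by
  have key : ∀ g : Perm (Fin n),
      permAct n g (xelt n r f) = permAct n (shOf hr g) (xelt n r f) := by
    intro g
    have hdecomp : g = shOf hr g * ((shOf hr g)⁻¹ * g) := by group
    conv_lhs => rw [hdecomp]
    rw [← permAct_permAct, permAct_xelt_H f hf (shOf_hcond hr g)]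
  calc ∑ σ ∈ shuffles n r, permAct n (τ * σ) (xelt n r f)
      = ∑ σ ∈ shuffles n r, permAct n (shOf hr (τ * σ)) (xelt n r f) :=
        Finset.sum_congr rfl (fun σ _ => key _)
    _ = ∑ σ ∈ shuffles n r, permAct n σ (xelt n r f) := by
        refine Finset.sum_nbij' (fun σ => shOf hr (τ * σ)) (fun s => shOf hr (τ⁻¹ * s))
          (fun σ _ => shOf_mem hr _) (fun s _ => shOf_mem hr _) ?_ ?_ (fun σ _ => rfl)
        · intro σ hσ
          have h0 : Hcond n r ((shOf hr (τ * σ))⁻¹ * (τ * σ)) := shOf_hcond hr (τ * σ)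
          have e1 : τ⁻¹ * shOf hr (τ * σ) = σ * ((shOf hr (τ * σ))⁻¹ * (τ * σ))⁻¹ := by
            group
          show shOf hr (τ⁻¹ * shOf hr (τ * σ)) = σ
          rw [e1, shOf_mul_H hr h0.inv, shOf_shuffle hr hσ]
        · intro s hs
          have h0 : Hcond n r ((shOf hr (τ⁻¹ * s))⁻¹ * (τ⁻¹ * s)) := shOf_hcond hr (τ⁻¹ * s)
          have e1 : τ * shOf hr (τ⁻¹ * s) = s * ((shOf hr (τ⁻¹ * s))⁻¹ * (τ⁻¹ * s))⁻¹ := by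
            group
          show shOf hr (τ * shOf hr (τ⁻¹ * s)) = s
          rw [e1, shOf_mul_H hr h0.inv, shOf_shuffle hr hs]

/-! ### The Vandermonde polynomial -/

def sortedPairs (n : ℕ) : Finset (Fin n × Fin n) := Finset.univ.filter fun p => p.1 < p.2

lemma mem_sortedPairs {p : Fin n × Fin n} : p ∈ sortedPairs n ↔ p.1 < p.2 := by
  simp [sortedPairs]

def VP (n : ℕ) : PolyS n := ∏ p ∈ sortedPairs n, (X p.2 - X p.1)

lemma prod_sortedPairs_eq {R : Type*} [CommRing R] (v : Fin n → R) :
    ∏ p ∈ sortedPairs n, (v p.2 - v p.1) = (Matrix.vandermonde v).det := by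
  rw [Matrix.det_vandermonde]
  rw [Finset.prod_sigma']
  refine Finset.prod_nbij' (fun p => ⟨p.1, p.2⟩) (fun q => (q.1, q.2)) ?_ ?_ ?_ ?_ ?_
  · intro p hp
    simp only [Finset.mem_sigma, Finset.mem_univ, Finset.mem_Ioi, true_and]
    exact mem_sortedPairs.mp hp
  · intro q hq
    simp only [Finset.mem_sigma, Finset.mem_univ, Finset.mem_Ioi, true_and] at hq
    exact mem_sortedPairs.mpr hq
  · intro p _; rfl
  · intro q _; rfl
  · intro p _; rfl

lemma rename_swap_VP {a b : Fin n} (hab : a ≠ b) :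
    rename ⇑(swap a b) (VP n) = - VP n := by
  have h1 : rename ⇑(swap a b) (VP n)
      = ∏ p ∈ sortedPairs n, ((X ∘ ⇑(swap a b)) p.2 - (X ∘ ⇑(swap a b)) p.1) := by
    rw [VP, map_prod]
    exact Finset.prod_congr rfl (fun p _ => by simp)
  rw [h1, prod_sortedPairs_eq]
  conv_rhs => rw [VP, prod_sortedPairs_eq]
  have h2 : Matrix.vandermonde (X ∘ ⇑(swap a b))
      = (Matrix.vandermonde (X : Fin n → PolyS n)).submatrix (swap a b) id := by
    ext i j
    simp [Matrix.vandermonde, Matrix.submatrix]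
  rw [h2, Matrix.det_permute, Perm.sign_swap hab]
  simp


lemma X_sub_X_ne_zero {a b : Fin n} (h : b ≠ a) : (X b - X a : PolyS n) ≠ 0 := by
  intro h0
  exact h (X_injective (sub_eq_zero.mp h0))

lemma euFactor_ne_zero : euFactor n r ≠ 0 := by
  rw [euFactor_eq]
  rw [Finset.prod_ne_zero_iff]
  intro p hp
  obtain ⟨h1, h2⟩ := mem_EPairs.mp hp
  exact X_sub_X_ne_zero (fun he => by omega)

lemma VP_ne_zero : VP n ≠ 0 := by
  rw [VP, Finset.prod_ne_zero_iff]
  intro p hp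
  exact X_sub_X_ne_zero (ne_of_gt (mem_sortedPairs.mp hp))

lemma rename_euFactor_dvd_VP (σ : Perm (Fin n)) :
    rename ⇑σ (euFactor n r) ∣ VP n := by
  classical
  rw [euFactor_eq, map_prod]
  simp only [map_sub, rename_X]
  set sp : Fin n × Fin n → Fin n × Fin n :=
    fun p => if σ p.1 < σ p.2 then (σ p.1, σ p.2) else (σ p.2, σ p.1) with hsp
  have hterm : ∀ p ∈ EPairs n r, (X (σ p.2) - X (σ p.1) : PolyS n)
      = (if σ p.1 < σ p.2 then (1 : PolyS n) else -1) * (X (sp p).2 - X (sp p).1) := by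
    intro p _
    by_cases h : σ p.1 < σ p.2
    · simp [hsp, h]
    · simp only [hsp, h, if_neg, if_false]
      ring
  rw [Finset.prod_congr rfl hterm, Finset.prod_mul_distrib]
  have hεu : IsUnit (∏ p ∈ EPairs n r, (if σ p.1 < σ p.2 then (1 : PolyS n) else -1)) := by
    apply IsUnit.of_mul_eq_one (∏ p ∈ EPairs n r, (if σ p.1 < σ p.2 then (1 : PolyS n) else -1))
    rw [← Finset.prod_mul_distrib]
    apply Finset.prod_eq_one
    intro p _
    split_ifs <;> ring
  have hinj : ∀ p ∈ EPairs n r, ∀ q ∈ EPairs n r, sp p = sp q → p = q := by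
    intro p hp q hq hpq
    obtain ⟨hp1, hp2⟩ := mem_EPairs.mp hp
    obtain ⟨hq1, hq2⟩ := mem_EPairs.mp hq
    simp only [hsp] at hpq
    have key : (σ p.1 = σ q.1 ∧ σ p.2 = σ q.2) ∨ (σ p.1 = σ q.2 ∧ σ p.2 = σ q.1) := by
      split_ifs at hpq <;> rw [Prod.mk.injEq] at hpq
      · exact Or.inl hpq
      · exact Or.inr hpq
      · exact Or.inr ⟨hpq.2, hpq.1⟩
      · exact Or.inl ⟨hpq.2, hpq.1⟩
    rcases key with ⟨k1, k2⟩ | ⟨k1, k2⟩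
    · exact Prod.ext (σ.injective k1) (σ.injective k2)
    · have e1 : p.1 = q.2 := σ.injective k1
      have h3 : (p.1 : ℕ) < r := hp1
      have h4 : r ≤ (q.2 : ℕ) := hq2
      rw [e1] at h3
      omega
  have himg : ∏ p ∈ EPairs n r, (X ((sp p).2) - X ((sp p).1) : PolyS n)
      = ∏ q ∈ (EPairs n r).image sp, (X q.2 - X q.1) := by rw [Finset.prod_image hinj]
  have hsub : (EPairs n r).image sp ⊆ sortedPairs n := by
    intro q hq
    obtain ⟨p, hp, rfl⟩ := Finset.mem_image.mp hq
    obtain ⟨hp1, hp2⟩ := mem_EPairs.mp hp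
    rw [mem_sortedPairs]
    simp only [hsp]
    split_ifs with h
    · exact h
    · have hne : σ p.2 ≠ σ p.1 := fun he => by
        have := σ.injective he
        have h3 : (p.1 : ℕ) < r := hp1
        have h4 : r ≤ (p.2 : ℕ) := hp2
        rw [← this] at h3
        omega
      exact lt_of_le_of_ne (not_lt.mp h) hne
  rw [himg]
  exact (hεu.mul_left_dvd).mpr
    (Finset.prod_dvd_prod_of_subset _ _ (fun q : Fin n × Fin n => (X q.2 - X q.1 : PolyS n)) hsub)


/-! ### Collapse homomorphisms and primality of `X b - X a` -/

def collapse (n : ℕ) (a b : Fin n) : PolyS n →ₐ[ℚ] PolyS n :=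
  aeval (fun k => if k = b then X a else X k)

lemma collapse_X (a b k : Fin n) :
    collapse n a b (X k) = if k = b then X a else X k := by
  simp [collapse]

lemma dvd_sub_collapse (a b : Fin n) (P : PolyS n) :
    (X b - X a : PolyS n) ∣ (P - collapse n a b P) := by
  induction P using MvPolynomial.induction_on with
  | C q => simp [collapse]
  | add p q hp hq =>
      have : p + q - collapse n a b (p + q) = (p - collapse n a b p) + (q - collapse n a b q) := by
        rw [map_add]; ring
      rw [this]
      exact dvd_add hp hq
  | mul_X p k hp =>
      have : p * X k - collapse n a b (p * X k)
          = (p - collapse n a b p) * X k + collapse n a b p * (X k - collapse n a b (X k)) := by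
        rw [map_mul]; ring
      rw [this]
      refine dvd_add (hp.mul_right _) (Dvd.dvd.mul_left ?_ _)
      rw [collapse_X]
      split_ifs with h
      · subst h; exact dvd_refl _
      · simp

lemma dvd_of_collapse_eq_zero {a b : Fin n} {P : PolyS n} (h : collapse n a b P = 0) :
    (X b - X a : PolyS n) ∣ P := by
  have := dvd_sub_collapse a b P
  rwa [h, sub_zero] at this

lemma collapse_comp_rename_swap {a b : Fin n} (hab : a ≠ b) :
    (collapse n a b).comp (rename ⇑(swap a b)) = collapse n a b := by
  apply MvPolynomial.algHom_ext
  intro k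
  simp only [AlgHom.comp_apply, rename_X, collapse_X]
  rcases eq_or_ne k a with rfl | hka
  · rw [swap_apply_left, if_pos rfl, if_neg hab]
  · rcases eq_or_ne k b with rfl | hkb
    · rw [swap_apply_right, if_neg hab, if_pos rfl]
    · rw [swap_apply_of_ne_of_ne hka hkb]

lemma collapse_eq_zero_of_antisym {a b : Fin n} (hab : a ≠ b) {P : PolyS n}
    (hP : rename ⇑(swap a b) P = - P) : collapse n a b P = 0 := by
  have h1 : collapse n a b (rename (⇑(swap a b)) P) = collapse n a b P :=
    AlgHom.congr_fun (collapse_comp_rename_swap hab) P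
  rw [hP, map_neg] at h1
  have h2 : (2 : PolyS n) * collapse n a b P = 0 := by linear_combination - h1
  have h3 : (2 : PolyS n) ≠ 0 := two_ne_zero
  exact (mul_eq_zero.mp h2).resolve_left h3

/-- The collapse to a smaller polynomial ring, with `X b ↦ X a`. -/
def collapse' (n : ℕ) (a b : Fin n) (hab : a ≠ b) :
    PolyS n →ₐ[ℚ] MvPolynomial {k : Fin n // k ≠ b} ℚ :=
  aeval (fun k => if hk : k = b then X ⟨a, hab⟩ else X ⟨k, hk⟩)

lemma collapse'_X (a b : Fin n) (hab : a ≠ b) (k : Fin n) :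
    collapse' n a b hab (X k) = if hk : k = b then X ⟨a, hab⟩ else X ⟨k, hk⟩ := by
  simp [collapse']

lemma rename_comp_collapse' {a b : Fin n} (hab : a ≠ b) :
    (rename (Subtype.val : {k : Fin n // k ≠ b} → Fin n)).comp (collapse' n a b hab)
      = collapse n a b := by
  apply MvPolynomial.algHom_ext
  intro k
  simp only [AlgHom.comp_apply, collapse'_X, collapse_X]
  split_ifs with h
  · simp
  · simp

lemma X_sub_X_dvd_iff {a b : Fin n} (hab : a ≠ b) (P : PolyS n) :
    (X b - X a : PolyS n) ∣ P ↔ collapse' n a b hab P = 0 := by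
  constructor
  · rintro ⟨Q, rfl⟩
    rw [map_mul]
    have : collapse' n a b hab (X b - X a) = 0 := by
      rw [map_sub, collapse'_X, collapse'_X, dif_pos rfl, dif_neg hab]
      simp
    rw [this, zero_mul]
  · intro h
    apply dvd_of_collapse_eq_zero (a := a) (b := b)
    have := AlgHom.congr_fun (rename_comp_collapse' hab) P
    rw [← this]
    simp only [AlgHom.comp_apply]
    rw [h, map_zero]

lemma prime_X_sub_X {a b : Fin n} (hab : a ≠ b) : Prime (X b - X a : PolyS n) := by
  refine ⟨X_sub_X_ne_zero (Ne.symm hab), ?_, ?_⟩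
  · intro hu
    have hdvd : (X b - X a : PolyS n) ∣ 1 := hu.dvd
    rw [X_sub_X_dvd_iff hab] at hdvd
    rw [map_one] at hdvd
    exact one_ne_zero hdvd
  · intro c d hcd
    rw [X_sub_X_dvd_iff hab] at hcd ⊢
    rw [X_sub_X_dvd_iff hab (P := d)]
    rw [map_mul] at hcd
    exact mul_eq_zero.mp hcd

lemma not_dvd_of_sorted_ne {p q : Fin n × Fin n} (hp : p.1 < p.2) (hq : q.1 < q.2)
    (hne : p ≠ q) : ¬ ((X p.2 - X p.1 : PolyS n) ∣ (X q.2 - X q.1)) := by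
  have hab : p.1 ≠ p.2 := ne_of_lt hp
  rw [X_sub_X_dvd_iff hab]
  rw [map_sub, collapse'_X, collapse'_X]
  intro h0
  rcases eq_or_ne q.2 p.2 with h2 | h2
  · rcases eq_or_ne q.1 p.2 with h1 | h1
    · omega
    · rw [dif_pos h2, dif_neg h1] at h0
      have := sub_eq_zero.mp h0
      have := X_injective this
      have hq1 : q.1 = p.1 := by
        have := congrArg Subtype.val this
        simpa using this.symm
      exact hne (Prod.ext hq1 h2).symm
  · rw [dif_neg h2] at h0
    rcases eq_or_ne q.1 p.2 with h1 | h1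
    · rw [dif_pos h1] at h0
      have := X_injective (sub_eq_zero.mp h0)
      have : q.2 = p.1 := by
        have := congrArg Subtype.val this
        simpa using this
      omega
    · rw [dif_neg h1] at h0
      have := X_injective (sub_eq_zero.mp h0)
      have : q.2 = q.1 := by
        have := congrArg Subtype.val this
        simpa using this
      omega

lemma prod_primes_dvd {A : Type*} [CommRing A] [IsDomain A] {β : Type*} [DecidableEq β]
    (s : Finset β) (f : β → A) (hp : ∀ x ∈ s, Prime (f x))
    (hnd : ∀ x ∈ s, ∀ y ∈ s, x ≠ y → ¬ (f x ∣ f y)) {z : A}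
    (hdvd : ∀ x ∈ s, f x ∣ z) : (∏ x ∈ s, f x) ∣ z := by
  classical
  induction s using Finset.induction_on generalizing z with
  | empty => simpa using one_dvd z
  | insert a t hnotmem ih =>
      obtain ⟨w, hw⟩ := hdvd a (Finset.mem_insert_self a t)
      rw [Finset.prod_insert hnotmem, hw]
      refine mul_dvd_mul_left (f a) (ih ?_ ?_ ?_)
      · exact fun x hx => hp x (Finset.mem_insert_of_mem hx)
      · exact fun x hx y hy hxy => hnd x (Finset.mem_insert_of_mem hx) y
          (Finset.mem_insert_of_mem hy) hxy
      · intro x hx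
        have hxz : f x ∣ f a * w := hw ▸ hdvd x (Finset.mem_insert_of_mem hx)
        rcases (hp x (Finset.mem_insert_of_mem hx)).2.2 _ _ hxz with h | h
        · exact absurd h (hnd x (Finset.mem_insert_of_mem hx) a
            (Finset.mem_insert_self a t) (fun he => hnotmem (he ▸ hx)))
        · exact h


lemma permAct_sum_eq (hr : r ≤ n) (f : PolyS n)
    (hf : ∀ σ : Perm (Fin n), Hcond n r σ → rename ⇑σ f = f) (τ : Perm (Fin n)) :
    permAct n τ (∑ σ ∈ shuffles n r, permAct n σ (xelt n r f))
      = ∑ σ ∈ shuffles n r, permAct n σ (xelt n r f) := by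
  rw [map_sum]
  rw [Finset.sum_congr rfl (fun σ _ => permAct_permAct τ σ (xelt n r f))]
  exact sum_shuffles_invariant hr f hf τ

end Stmt4Aux

open Stmt4Aux

/-- The shuffle-sum `∑_{σ ∈ Sh(r,n-r)} σ(f/∏(λᵢ-λⱼ))` of a `𝔖ᵣ×𝔖_{n-r}`-invariant
polynomial is a polynomial, symmetric under the full `𝔖ₙ`. -/
theorem stmt_4 (n r : ℕ) (hr : r ≤ n) (f : PolyS n)
    (hf : ∀ σ : Perm (Fin n),
      (∀ i : Fin n, (i : ℕ) < r → ((σ i : ℕ) < r)) → rename ⇑σ f = f) :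
    ∃ g : PolyS n, g.IsSymmetric ∧
      ∑ σ ∈ shuffles n r,
          permAct n σ (algebraMap (PolyS n) (FracK n) f
            / algebraMap (PolyS n) (FracK n) (euFactor n r))
        = algebraMap (PolyS n) (FracK n) g := by
  classical
  have hf' : ∀ σ : Perm (Fin n), Hcond n r σ → rename ⇑σ f = f := hf
  have hxe : (algebraMap (PolyS n) (FracK n) f / algebraMap (PolyS n) (FracK n) (euFactor n r))
      = xelt n r f := rfl
  simp only [hxe]
  -- choose the cofactors
  have hqex : ∀ σ : Perm (Fin n), ∃ q : PolyS n,
      VP n = rename ⇑σ (euFactor n r) * q := fun σ => rename_euFactor_dvd_VP σ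
  choose qp hqp using hqex
  have hrenne : ∀ σ : Perm (Fin n), aM n (rename ⇑σ (euFactor n r)) ≠ 0 := by
    intro σ h0
    have h1 : rename ⇑σ (euFactor n r) = 0 := aM_injective n (by rw [h0, map_zero])
    have h2 : rename ⇑σ (euFactor n r) = rename ⇑σ (0 : PolyS n) := by rw [map_zero, h1]
    exact euFactor_ne_zero (rename_injective _ σ.injective h2)
  have key1 : (∑ σ ∈ shuffles n r, permAct n σ (xelt n r f)) * aM n (VP n)
      = aM n (∑ σ ∈ shuffles n r, rename ⇑σ f * qp σ) := by
    rw [Finset.sum_mul, map_sum]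
    apply Finset.sum_congr rfl
    intro σ _
    rw [xelt, map_div₀]
    rw [show ((algebraMap (PolyS n) (FracK n)) (euFactor n r)) = aM n (euFactor n r) from rfl]
    rw [show ((algebraMap (PolyS n) (FracK n)) f) = aM n f from rfl]
    rw [permAct_aM, permAct_aM, hqp σ, map_mul, map_mul]
    have he0 := hrenne σ
    field_simp
  have hanti : ∀ p ∈ sortedPairs n,
      (X p.2 - X p.1 : PolyS n) ∣ (∑ σ ∈ shuffles n r, rename ⇑σ f * qp σ) := by
    intro p hp
    have hlt := mem_sortedPairs.mp hp
    have hab : p.1 ≠ p.2 := ne_of_lt hlt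
    apply dvd_of_collapse_eq_zero (a := p.1) (b := p.2)
    apply collapse_eq_zero_of_antisym hab
    apply aM_injective n
    rw [map_neg, ← permAct_aM, ← key1, map_mul]
    rw [permAct_sum_eq hr f hf' (swap p.1 p.2)]
    rw [permAct_aM, rename_swap_VP hab, map_neg]
    ring
  have hVP_dvd : VP n ∣ (∑ σ ∈ shuffles n r, rename ⇑σ f * qp σ) := by
    rw [VP]
    apply prod_primes_dvd
    · intro p hp
      exact prime_X_sub_X (ne_of_lt (mem_sortedPairs.mp hp))
    · intro p hp q hq hne
      exact not_dvd_of_sorted_ne (mem_sortedPairs.mp hp) (mem_sortedPairs.mp hq) hne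
    · exact hanti
  obtain ⟨g, hg⟩ := hVP_dvd
  have hVne : aM n (VP n) ≠ 0 := by
    intro h0
    exact VP_ne_zero (aM_injective n (by rw [h0, map_zero]))
  have hSg : (∑ σ ∈ shuffles n r, permAct n σ (xelt n r f)) = aM n g := by
    have h1 : (∑ σ ∈ shuffles n r, permAct n σ (xelt n r f)) * aM n (VP n)
        = aM n g * aM n (VP n) := by
      rw [key1, hg, map_mul]; ring
    exact mul_right_cancel₀ hVne h1
  refine ⟨g, fun τ => ?_, hSg⟩
  apply aM_injective n
  rw [← permAct_aM, ← hSg, permAct_sum_eq hr f hf' τ, hSg]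

end
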